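/- Fix k ∈ ℕ, k ≥ 1, β > 0. Consider the equilibrium equation for the desingularized reduced problem ẋ = α(ν - kβν^{-k}), ν̇ = (2x - αg₀ + βν^{-k})ν with parameters α > 0, g₀ ∈ ℝ. Then there is a unique equilibrium with ν > 0, located at ν_f = (kβ)^{1/(k+1)} and x_f = (α g₀)/2 - (β/2)·ν_f^{-k}, and the linearization there has eigenvalues -ν_f/2 ± (1/2)√(8(k+1)ν_f α + ν_f²). In particular, for every α > 0 the two eigenvalues are real and of opposite sign, so the equilibrium is a saddle. -/

import Mathlib

/-- Folded saddle: the desingularized reduced system ẋ = α(ν - kβν^{-k}),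
ν̇ = (2x - αg₀ + βν^{-k})ν with α > 0 has a unique equilibrium with ν > 0,
at ν_f = (kβ)^{1/(k+1)}, x_f = αg₀/2 - (β/2)ν_f^{-k}; the eigenvalues of
the linearization there are -ν_f/2 ± (1/2)√(8(k+1)ν_f α + ν_f²), which are
real and of opposite sign, so the equilibrium is a saddle. -/
theorem stmt12 (k : ℕ) (hk : 1 ≤ k) (β α g₀ : ℝ) (hβ : 0 < β) (hα : 0 < α)
    (W : ℝ × ℝ → ℝ × ℝ)
    (hW : ∀ z : ℝ × ℝ,
      W z = (α * (z.2 - (k : ℝ) * β / z.2 ^ k),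
             (2 * z.1 - α * g₀ + β / z.2 ^ k) * z.2)) :
    (∀ z : ℝ × ℝ, 0 < z.2 →
      (W z = 0 ↔
        z = (α * g₀ / 2 - β / 2 / (((k : ℝ) * β) ^ ((1 : ℝ) / ((k : ℝ) + 1))) ^ k,
             ((k : ℝ) * β) ^ ((1 : ℝ) / ((k : ℝ) + 1))))) ∧
    (∀ μ : ℝ,
      Module.End.HasEigenvalue
        ((fderiv ℝ W
          (α * g₀ / 2 - β / 2 / (((k : ℝ) * β) ^ ((1 : ℝ) / ((k : ℝ) + 1))) ^ k,
           ((k : ℝ) * β) ^ ((1 : ℝ) / ((k : ℝ) + 1)))).toLinearMap) μ ↔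
        (μ = -((k : ℝ) * β) ^ ((1 : ℝ) / ((k : ℝ) + 1)) / 2 +
             Real.sqrt (8 * ((k : ℝ) + 1) * ((k : ℝ) * β) ^ ((1 : ℝ) / ((k : ℝ) + 1)) * α +
               (((k : ℝ) * β) ^ ((1 : ℝ) / ((k : ℝ) + 1))) ^ 2) / 2 ∨
         μ = -((k : ℝ) * β) ^ ((1 : ℝ) / ((k : ℝ) + 1)) / 2 -
             Real.sqrt (8 * ((k : ℝ) + 1) * ((k : ℝ) * β) ^ ((1 : ℝ) / ((k : ℝ) + 1)) * α +
               (((k : ℝ) * β) ^ ((1 : ℝ) / ((k : ℝ) + 1))) ^ 2) / 2)) ∧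
    (0 < -((k : ℝ) * β) ^ ((1 : ℝ) / ((k : ℝ) + 1)) / 2 +
        Real.sqrt (8 * ((k : ℝ) + 1) * ((k : ℝ) * β) ^ ((1 : ℝ) / ((k : ℝ) + 1)) * α +
          (((k : ℝ) * β) ^ ((1 : ℝ) / ((k : ℝ) + 1))) ^ 2) / 2) ∧
    (-((k : ℝ) * β) ^ ((1 : ℝ) / ((k : ℝ) + 1)) / 2 -
        Real.sqrt (8 * ((k : ℝ) + 1) * ((k : ℝ) * β) ^ ((1 : ℝ) / ((k : ℝ) + 1)) * α +
          (((k : ℝ) * β) ^ ((1 : ℝ) / ((k : ℝ) + 1))) ^ 2) / 2 < 0) := by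
  set ν : ℝ := ((k : ℝ) * β) ^ ((1 : ℝ) / ((k : ℝ) + 1)) with hνdef
  have hkpos : (0:ℝ) < (k:ℝ) := by exact_mod_cast Nat.lt_of_lt_of_le Nat.zero_lt_one hk
  have hkβ : 0 < (k:ℝ) * β := mul_pos hkpos hβ
  have hνpos : 0 < ν := Real.rpow_pos_of_pos hkβ _
  have hν0 : ν ≠ 0 := hνpos.ne'
  have hkey : ν ^ (k+1) = (k:ℝ) * β := by
    rw [hνdef, ← Real.rpow_natCast _ (k+1), ← Real.rpow_mul hkβ.le]
    rw [show (1:ℝ) / ((k:ℝ)+1) * ((k+1:ℕ):ℝ) = 1 by push_cast; field_simp]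
    exact Real.rpow_one _
  set xf : ℝ := α * g₀ / 2 - β / 2 / ν ^ k with hxf
  set D₀ : ℝ := 8 * ((k : ℝ) + 1) * ν * α + ν ^ 2 with hD₀
  set s : ℝ := Real.sqrt D₀ with hs
  have hD₀pos : 0 < D₀ := by positivity
  have hs2 : s ^ 2 = D₀ := Real.sq_sqrt hD₀pos.le
  have hs0 : 0 ≤ s := Real.sqrt_nonneg _
  -- abbreviations
  set b : ℝ := α * ((k:ℝ) + 1) with hb
  set c : ℝ := 2 * ν with hc
  have hbpos : 0 < b := by positivity
  obtain ⟨m, rfl⟩ : ∃ m, k = m + 1 := ⟨k - 1, (Nat.succ_pred_eq_of_pos hk).symm⟩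
  have hkey' : ν ^ (m + 2) = ((m:ℝ) + 1) * β := by exact_mod_cast hkey
  -- Part 1: equilibria
  have part1 : ∀ z : ℝ × ℝ, 0 < z.2 → (W z = 0 ↔ z = (xf, ν)) := by
    intro z hz
    rw [hW z, Prod.ext_iff, Prod.ext_iff]
    simp only [Prod.fst_zero, Prod.snd_zero]
    constructor
    · rintro ⟨h1, h2⟩
      have hz0 : z.2 ≠ 0 := hz.ne'
      have hzk : z.2 ^ (m+1) ≠ 0 := pow_ne_zero _ hz0
      have hpow : z.2 ^ (m+1+1) = (↑(m+1):ℝ) * β := by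
        have h1' : z.2 - (↑(m+1):ℝ) * β / z.2 ^ (m+1) = 0 := by
          rcases mul_eq_zero.1 h1 with h | h
          · exact absurd h hα.ne'
          · exact h
        field_simp at h1'
        push_cast at h1' ⊢
        linear_combination h1'
      have hzν : z.2 = ν := by
        rcases lt_trichotomy z.2 ν with h | h | h
        · exfalso
          have := pow_lt_pow_left₀ h hz.le (by omega) |>.trans_eq hkey
          -- z.2^(m+2) < kβ contradicts hpow
          rw [hpow] at this; exact lt_irrefl _ this
        · exact h
        · exfalso
          have := pow_lt_pow_left₀ h hνpos.le (by omega : m+1+1 ≠ 0)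
          rw [hpow, hkey] at this; exact lt_irrefl _ this
      refine ⟨?_, hzν⟩
      rw [hzν] at h2
      have h2' : 2 * z.1 - α * g₀ + β / ν ^ (m+1) = 0 := by
        rcases mul_eq_zero.1 h2 with h | h
        · exact h
        · exact absurd h hν0
      rw [hxf]
      have hνk : ν ^ (m+1) ≠ 0 := pow_ne_zero _ hν0
      field_simp at h2' ⊢
      linarith
    · rintro ⟨h1, h2⟩
      rw [h1, h2]
      constructor
      · have : ν - (↑(m+1):ℝ) * β / ν ^ (m+1) = 0 := by
          field_simp
          push_cast
          linear_combination hkey'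
        rw [this, mul_zero]
      · have : 2 * xf - α * g₀ + β / ν ^ (m+1) = 0 := by
          rw [hxf]; ring
        rw [this, zero_mul]
  -- derivative
  have hφ : HasDerivAt (fun t : ℝ => α * (t - (↑(m+1):ℝ) * β / t ^ (m+1))) b ν := by
    have h := (((hasDerivAt_id ν).sub
      ((hasDerivAt_const ν ((↑(m+1):ℝ) * β)).div (hasDerivAt_pow (m+1) ν) (pow_ne_zero _ hν0))).const_mul α)
    refine h.congr_deriv (Eq.symm ?_)
    have hνk : ν ^ (m+1) ≠ 0 := pow_ne_zero _ hν0
    rw [hb]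
    simp only [Nat.add_sub_cancel]
    rw [show (0 * ν ^ (m+1) - (↑(m+1):ℝ) * β * ((↑(m+1):ℝ) * ν ^ m)) / (ν ^ (m+1)) ^ 2 = -((m:ℝ) + 1) by
      rw [div_eq_iff (by positivity)]; push_cast
      linear_combination (((m:ℝ) + 1) * ν ^ m) * hkey']
    push_cast
    ring
  have hψ : HasDerivAt (fun t : ℝ => β / t ^ (m+1)) (-1) ν := by
    have h := (hasDerivAt_const ν β).div (hasDerivAt_pow (m+1) ν) (pow_ne_zero _ hν0)
    refine h.congr_deriv (Eq.symm ?_)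
    have hνk : ν ^ (m+1) ≠ 0 := pow_ne_zero _ hν0
    simp only [Nat.add_sub_cancel]
    rw [eq_div_iff (by positivity)]
    push_cast
    linear_combination -(ν ^ m * hkey')
  have h1 : HasFDerivAt (fun z : ℝ × ℝ => α * (z.2 - (↑(m+1):ℝ) * β / z.2 ^ (m+1)))
      (b • ContinuousLinearMap.snd ℝ ℝ ℝ) (xf, ν) :=
    by have := hφ.comp_hasFDerivAt (xf, ν) (hasFDerivAt_snd (𝕜 := ℝ) (E := ℝ) (F := ℝ) (p := (xf, ν))); exact this
  have hu : HasFDerivAt (fun z : ℝ × ℝ => 2 * z.1 - α * g₀ + β / z.2 ^ (m+1))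
      (((2:ℝ) • ContinuousLinearMap.fst ℝ ℝ ℝ) + ((-1:ℝ) • ContinuousLinearMap.snd ℝ ℝ ℝ))
      (xf, ν) :=
    ((hasFDerivAt_fst.const_mul (2:ℝ)).sub_const (α * g₀)).add
      (by have := hψ.comp_hasFDerivAt (xf, ν) (hasFDerivAt_snd (𝕜 := ℝ) (E := ℝ) (F := ℝ) (p := (xf, ν))); exact this)
  have h2 := hu.mul (hasFDerivAt_snd : HasFDerivAt _ _ ((xf, ν) : ℝ × ℝ))
  have hD := h1.prodMk h2
  have hWfun : W = fun z : ℝ × ℝ =>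
      (α * (z.2 - (↑(m+1):ℝ) * β / z.2 ^ (m+1)),
       (2 * z.1 - α * g₀ + β / z.2 ^ (m+1)) * z.2) := funext hW
  have hfd : fderiv ℝ (fun z : ℝ × ℝ =>
      (α * (z.2 - (↑(m+1):ℝ) * β / z.2 ^ (m+1)),
       (2 * z.1 - α * g₀ + β / z.2 ^ (m+1)) * z.2)) (xf, ν) = _ := hD.fderiv
  have hup : 2 * xf - α * g₀ + β / ν ^ (m+1) = 0 := by rw [hxf]; ring
  have heval : ∀ h : ℝ × ℝ,
      (fderiv ℝ W (xf, ν)) h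
        = (b * h.2, c * h.1 + (-ν) * h.2) := by
    intro h
    rw [hWfun, hfd]
    simp only [ContinuousLinearMap.prod_apply, ContinuousLinearMap.add_apply,
      ContinuousLinearMap.smul_apply, ContinuousLinearMap.coe_fst',
      ContinuousLinearMap.coe_snd', smul_eq_mul]
    refine Prod.ext rfl ?_
    simp only [hup]
    rw [hc]
    ring
  set T := fderiv ℝ W (xf, ν) with hT
  have hs2' : s ^ 2 = 8 * (((m:ℝ)+1) + 1) * ν * α + ν ^ 2 := by
    rw [hs2, hD₀]; push_cast; ring
  have hquad : ∀ μ : ℝ, (μ ^ 2 + ν * μ - b * c = 0 ↔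
      (μ = -ν / 2 + s / 2 ∨ μ = -ν / 2 - s / 2)) := by
    intro μ
    have hfac : μ ^ 2 + ν * μ - b * c = (μ - (-ν / 2 + s / 2)) * (μ - (-ν / 2 - s / 2)) := by
      rw [hb, hc]
      push_cast
      linear_combination (1/4 : ℝ) * hs2'
    rw [hfac, mul_eq_zero, sub_eq_zero, sub_eq_zero]
  refine ⟨part1, ?_, ?_, ?_⟩
  · intro μ
    constructor
    · intro hμ
      obtain ⟨v, hv⟩ := hμ.exists_hasEigenvector
      have hveq : T v = μ • v := Module.End.mem_eigenspace_iff.1 hv.1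
      rw [heval v] at hveq
      have e1 : b * v.2 = μ * v.1 := by
        have := congrArg Prod.fst hveq; simpa [smul_eq_mul] using this
      have e2 : c * v.1 + (-ν) * v.2 = μ * v.2 := by
        have := congrArg Prod.snd hveq; simpa [smul_eq_mul] using this
      have hv2 : v.2 ≠ 0 := by
        intro h0
        apply hv.2
        have hc0 : c ≠ 0 := by rw [hc]; positivity
        have hv1 : v.1 = 0 := by
          rw [h0] at e2
          have hcv : c * v.1 = 0 := by linarith
          exact (mul_eq_zero.1 hcv).resolve_left hc0
        exact Prod.ext hv1 h0
      apply (hquad μ).1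
      have h0 : (μ ^ 2 + ν * μ - b * c) * v.2 = 0 := by
        linear_combination (-c) * e1 + (-μ) * e2
      rcases mul_eq_zero.1 h0 with h | h
      · exact h
      · exact absurd h hv2
    · intro hμ
      have hq : μ ^ 2 + ν * μ - b * c = 0 := (hquad μ).2 hμ
      apply Module.End.hasEigenvalue_of_hasEigenvector (x := (b, μ))
      constructor
      · apply Module.End.mem_eigenspace_iff.2
        show T (b, μ) = μ • (b, μ)
        rw [heval (b, μ)]
        refine Prod.ext ?_ ?_
        · simp [mul_comm]
        · simp only [Prod.smul_mk, smul_eq_mul]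
          linear_combination -hq
      · intro h
        have := congrArg Prod.fst h
        exact hbpos.ne' this
  · have hm0 : (0:ℝ) ≤ (m:ℝ) := Nat.cast_nonneg m
    nlinarith [hs2', hs0, hνpos, hα, hm0, mul_pos hνpos hα]
  · linarith [hs0, hνpos]
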